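/- There is no strictly increasing transfinite sequence of length ω₁ of nonnegative upper semicontinuous functions on a Polish space X (with respect to the pointwise order). In fact, there exists a strictly order-preserving map from (USC⁺(X), <_p) into ([0,1], <). -/

import Mathlib

open Ordinal Set

noncomputable section

/-- Parity of an ordinal: `a = γ + n` with `γ` limit, `n < ω`; even iff `n` is even. -/
def OrdEven (a : Ordinal) : Prop := a % 2 = 0

/-- Upper semicontinuity. -/
def USC {X : Type} [TopologicalSpace X] (f : X → ℝ) : Prop :=
  ∀ r : ℝ, IsOpen (f ⁻¹' Set.Iio r)

/-- The least ordinal where two transfinite sequences differ. -/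
def dOrd (f g : Ordinal → ℝ) : Ordinal := sInf {a | f a ≠ g a}

/-- The alternating lexicographical order on transfinite sequences of reals. -/
def AltLex (f g : Ordinal → ℝ) : Prop :=
  f ≠ g ∧ ((OrdEven (dOrd f g) ∧ f (dOrd f g) < g (dOrd f g)) ∨
    (¬ OrdEven (dOrd f g) ∧ g (dOrd f g) < f (dOrd f g)))

/-- `f` encodes a strictly decreasing countable transfinite sequence in `[0,1]`
with last element `0` at index `ξ` (padded with `0` beyond `ξ`). -/
def IsDSeqLen (f : Ordinal → ℝ) (ξ : Ordinal) : Prop :=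
  ξ < (Cardinal.aleph 1).ord ∧ (∀ a, f a ∈ Set.Icc (0:ℝ) 1) ∧
  (∀ a b, a < b → b ≤ ξ → f b < f a) ∧ (∀ a, ξ ≤ a → f a = 0)

/-- Membership in `[0,1]^{<w1}_{↘0}`. -/
def IsDSeq (f : Ordinal → ℝ) : Prop := ∃ ξ, IsDSeqLen f ξ

theorem exists_Phi (X : Type) [TopologicalSpace X] [PolishSpace X] :
    ∃ Φ : (X → ℝ) → ℝ,
      (∀ f, USC f → (∀ x, 0 ≤ f x) → Φ f ∈ Set.Icc (0:ℝ) 1) ∧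
      (∀ f g, USC f → USC g → (∀ x, 0 ≤ f x) → (∀ x, 0 ≤ g x) →
        (∀ x, f x ≤ g x) → f ≠ g → Φ f < Φ g) := by
  obtain ⟨b, hbc, -, hb⟩ := TopologicalSpace.exists_countable_basis X
  haveI : Countable b := hbc.to_subtype
  obtain ⟨e, he⟩ := exists_injective_nat (↥b × ℚ)
  set G : ℕ → ℝ := fun n => (1/2 : ℝ) ^ (n + 1) with hG
  have hGpos : ∀ n, 0 < G n := fun n => by positivity
  have hGsum : Summable G := by
    have : Summable (fun n : ℕ => ((1:ℝ)/2) ^ n) := summable_geometric_two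
    exact (this.comp_injective (add_left_injective 1))
  have hGtot : ∑' n, G n = 1 := by
    have h2 : ∀ n : ℕ, G n = (1:ℝ) / 2 / 2 ^ n := by
      intro n
      rw [hG]; simp only [pow_succ, one_div, inv_pow]; ring
    calc ∑' n, G n = ∑' n : ℕ, (1:ℝ) / 2 / 2 ^ n := by exact tsum_congr h2
      _ = 1 := tsum_geometric_two' 1
  set w : ↥b × ℚ → ℝ := fun p => G (e p) with hwdef
  have hwpos : ∀ p, 0 < w p := fun p => hGpos _
  have hwsum : Summable w := hGsum.comp_injective he
  classical
  set T : (X → ℝ) → (↥b × ℚ) → ℝ := fun f p =>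
    if ∃ y ∈ (p.1 : Set X), (p.2 : ℝ) ≤ f y then w p else 0 with hTdef
  have hT0 : ∀ f p, 0 ≤ T f p := by
    intro f p; rw [hTdef]; dsimp only
    split <;> [exact (hwpos p).le; exact le_rfl]
  have hTle : ∀ f p, T f p ≤ w p := by
    intro f p; rw [hTdef]; dsimp only
    split <;> [exact le_rfl; exact (hwpos p).le]
  have hTs : ∀ f, Summable (T f) := fun f =>
    hwsum.of_nonneg_of_le (hT0 f) (hTle f)
  refine ⟨fun f => ∑' p, T f p, ?_, ?_⟩
  · intro f hf hf0
    constructor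
    · exact tsum_nonneg (hT0 f)
    · calc ∑' p, T f p ≤ ∑' p, w p := Summable.tsum_le_tsum (hTle f) (hTs f) hwsum
        _ ≤ ∑' n, G n :=
          Summable.tsum_le_tsum_of_inj e he (fun n _ => (hGpos n).le)
            (fun p => le_rfl) hwsum hGsum
        _ = 1 := hGtot
  · intro f g hf hg hf0 hg0 hle hne
    obtain ⟨x, hx⟩ : ∃ x, f x ≠ g x := by
      by_contra h; push_neg at h; exact hne (funext h)
    have hxlt : f x < g x := lt_of_le_of_ne (hle x) hx
    obtain ⟨q, hq1, hq2⟩ := exists_rat_btwn hxlt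
    have hxmem : x ∈ f ⁻¹' Set.Iio (q : ℝ) := hq1
    obtain ⟨B, hBb, hxB, hBsub⟩ := hb.exists_subset_of_mem_open hxmem (hf q)
    set p : ↥b × ℚ := (⟨B, hBb⟩, q) with hp
    have hTf : T f p = 0 := by
      rw [hTdef]; dsimp only
      rw [if_neg]
      rintro ⟨y, hyB, hyq⟩
      exact absurd (hBsub hyB) (not_lt.2 hyq)
    have hTg : T g p = w p := by
      rw [hTdef]; dsimp only
      exact if_pos ⟨x, hxB, hq2.le⟩
    have hmono : T f ≤ T g := by
      intro p'
      rw [hTdef]; dsimp only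
      split
      · next hc =>
          obtain ⟨y, hyB, hyq⟩ := hc
          rw [if_pos ⟨y, hyB, hyq.trans (hle y)⟩]
      · exact hT0 g p'
    exact Summable.tsum_lt_tsum hmono (by rw [hTf, hTg]; exact hwpos p) (hTs f) (hTs g)

theorem stmt_0 (X : Type) [TopologicalSpace X] [PolishSpace X] :
    (¬ ∃ F : Ordinal → X → ℝ,
        (∀ a, a < (Cardinal.aleph 1).ord → USC (F a) ∧ ∀ x, 0 ≤ F a x) ∧
        (∀ a b, a < b → b < (Cardinal.aleph 1).ord →
          (∀ x, F a x ≤ F b x) ∧ F a ≠ F b)) ∧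
    ∃ Φ : (X → ℝ) → ℝ,
      (∀ f, USC f → (∀ x, 0 ≤ f x) → Φ f ∈ Set.Icc (0:ℝ) 1) ∧
      (∀ f g, USC f → USC g → (∀ x, 0 ≤ f x) → (∀ x, 0 ≤ g x) →
        (∀ x, f x ≤ g x) → f ≠ g → Φ f < Φ g) := by
  obtain ⟨Φ, hΦ1, hΦ2⟩ := exists_Phi X
  refine ⟨?_, Φ, hΦ1, hΦ2⟩
  rintro ⟨F, h1, h2⟩
  set w1 := (Cardinal.aleph 1).ord with hw1
  have hlim : Order.IsSuccLimit w1 := Cardinal.isSuccLimit_ord (Cardinal.aleph0_le_aleph 1)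
  have hsucc : ∀ a : Ordinal, a < w1 → a + 1 < w1 := by
    intro a ha
    rw [Ordinal.add_one_eq_succ]
    exact hlim.succ_lt ha
  -- strict monotonicity of Φ ∘ F
  have hΦmono : ∀ a c : Ordinal, a < c → c < w1 → Φ (F a) < Φ (F c) := by
    intro a c hac hc
    have ha : a < w1 := hac.trans hc
    obtain ⟨hFle, hFne⟩ := h2 a c hac hc
    exact hΦ2 (F a) (F c) (h1 a ha).1 (h1 c hc).1 (h1 a ha).2 (h1 c hc).2 hFle hFne
  have key : ∀ a : ↥(Set.Iio w1), ∃ r : ℚ,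
      Φ (F a) < (r : ℝ) ∧ (r : ℝ) < Φ (F ((a : Ordinal) + 1)) := by
    intro ⟨a, ha⟩
    exact exists_rat_btwn (hΦmono a (a + 1) (lt_add_one a) (hsucc a ha))
  choose Q hQ1 hQ2 using key
  have hQmono : ∀ a c : ↥(Set.Iio w1), (a : Ordinal) < c → Q a < Q c := by
    intro a c hac
    have h1' : (Q a : ℝ) < Φ (F ((a : Ordinal) + 1)) := hQ2 a
    have h3' : Φ (F (c : Ordinal)) < (Q c : ℝ) := hQ1 c
    have hsle : (a : Ordinal) + 1 ≤ (c : Ordinal) := by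
      rw [Ordinal.add_one_eq_succ]; exact Order.succ_le_of_lt hac
    have h2' : Φ (F ((a : Ordinal) + 1)) ≤ Φ (F (c : Ordinal)) := by
      rcases eq_or_lt_of_le hsle with h | h
      · rw [h]
      · exact (hΦmono _ _ h c.2).le
    have : (Q a : ℝ) < (Q c : ℝ) := h1'.trans_le (h2'.trans h3'.le)
    exact_mod_cast this
  have hQinj : Function.Injective Q := by
    intro a c hac
    rcases lt_trichotomy (a : Ordinal) (c : Ordinal) with h | h | h
    · exact absurd hac (hQmono a c h).ne
    · exact Subtype.ext h
    · exact absurd hac.symm (hQmono c a h).ne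
  obtain ⟨en, hen⟩ := exists_injective_nat ℚ
  haveI hcnt : Countable ↥(Set.Iio w1) := ⟨⟨fun a => en (Q a), hen.comp hQinj⟩⟩
  have hle : Cardinal.mk ↥(Set.Iio w1) ≤ Cardinal.aleph0 :=
    Cardinal.mk_le_aleph0_iff.2 hcnt
  rw [Ordinal.mk_Iio_ordinal, hw1, Cardinal.card_ord] at hle
  exact absurd (Cardinal.lift_le_aleph0.1 hle)
    (not_le.2 Cardinal.aleph0_lt_aleph_one)
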